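/- Let φ = (1+√5)/2 and f_n(x,y) = sin(F_{n+1}x − F_n y) on 𝕋², where F_n are Fibonacci numbers. Then ‖∇f_n‖_{L²}·‖∂ₓf_n + φ·∂_yf_n‖_{L²} = √(F_{n+1}²/F_n² + 1)·|F_{n+1}/F_n − φ|·F_n²·‖f_n‖²_{L²}, and this quantity divided by ‖f_n‖²_{L²} converges to √((5+√5)/10) = |(1,φ)|/√5 as n → ∞. -/

import Mathlib

open Real

/- We model a mean-zero function `f ∈ H¹(𝕋²)` on the flat torus `𝕋² = ℝ²/(2πℤ)²`
by its Fourier coefficients `a : ℤ × ℤ → ℂ`, `f = Σ aₖ e^{ik·x}`, `a₀ = 0`.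
By Parseval, `‖f‖²_{L²} = (2π)² Σ |aₖ|²`, `‖∇f‖²_{L²} = (2π)² Σ |k|²|aₖ|²` and
`‖⟨∇f,α⟩‖²_{L²} = (2π)² Σ ⟨k,α⟩²|aₖ|²`.  All inequalities below are homogeneous
in the number of `L²`-norm factors, so the constant `(2π)²` is harmlessly dropped. -/

/-- `‖f‖²_{L²(𝕋²)}` (modulo the factor `(2π)²`). -/
noncomputable def normSq (a : ℤ × ℤ → ℂ) : ℝ := ∑' k : ℤ × ℤ, ‖a k‖ ^ 2

/-- `‖∇f‖²_{L²(𝕋²)}` (modulo the factor `(2π)²`). -/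
noncomputable def gradSq (a : ℤ × ℤ → ℂ) : ℝ :=
  ∑' k : ℤ × ℤ, (((k.1 : ℝ)) ^ 2 + ((k.2 : ℝ)) ^ 2) * ‖a k‖ ^ 2

/-- `‖⟨∇f, α⟩‖²_{L²(𝕋²)}` (modulo the factor `(2π)²`). -/
noncomputable def dirSq (α : ℝ × ℝ) (a : ℤ × ℤ → ℂ) : ℝ :=
  ∑' k : ℤ × ℤ, (α.1 * k.1 + α.2 * k.2) ^ 2 * ‖a k‖ ^ 2

/-- `f ∈ H¹(𝕋²)`. -/
def IsH1 (a : ℤ × ℤ → ℂ) : Prop :=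
  Summable (fun k : ℤ × ℤ => ‖a k‖ ^ 2) ∧
  Summable (fun k : ℤ × ℤ => (((k.1 : ℝ)) ^ 2 + ((k.2 : ℝ)) ^ 2) * ‖a k‖ ^ 2)

open Filter

/-- Fourier coefficients of `f_n(x,y) = sin(F_{n+1} x - F_n y)`. -/
noncomputable def fibCoeff (n : ℕ) : ℤ × ℤ → ℂ := fun m =>
  if m = ((Nat.fib (n + 1) : ℤ), -(Nat.fib n : ℤ)) then (2 * Complex.I)⁻¹
  else if m = (-(Nat.fib (n + 1) : ℤ), (Nat.fib n : ℤ)) then -(2 * Complex.I)⁻¹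
  else 0

open goldenRatio

lemma key (n : ℕ) (w : ℤ × ℤ → ℝ) :
    ∑' k : ℤ × ℤ, w k * ‖fibCoeff n k‖ ^ 2
      = (w ((Nat.fib (n + 1) : ℤ), -(Nat.fib n : ℤ))
          + w (-(Nat.fib (n + 1) : ℤ), (Nat.fib n : ℤ))) / 4 := by
  set p : ℤ × ℤ := ((Nat.fib (n + 1) : ℤ), -(Nat.fib n : ℤ))
  set q : ℤ × ℤ := (-(Nat.fib (n + 1) : ℤ), (Nat.fib n : ℤ))
  have hfib : 0 < Nat.fib (n + 1) := Nat.fib_pos.2 (Nat.succ_pos n)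
  have hpq : p ≠ q := by
    simp only [p, q, Prod.mk.injEq, ne_eq, not_and]
    intro h; omega
  have hnorm : ‖(2 * Complex.I)⁻¹‖ = 1 / 2 := by rw [norm_inv]; simp
  rw [tsum_eq_sum (s := {p, q}) (by
    intro b hb
    simp only [Finset.mem_insert, Finset.mem_singleton, not_or] at hb
    simp [fibCoeff, show ¬ b = ((Nat.fib (n + 1) : ℤ), -(Nat.fib n : ℤ)) from hb.1,
      show ¬ b = (-(Nat.fib (n + 1) : ℤ), (Nat.fib n : ℤ)) from hb.2])]
  rw [Finset.sum_pair hpq]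
  have hp : fibCoeff n p = (2 * Complex.I)⁻¹ := if_pos rfl
  have hq : fibCoeff n q = -(2 * Complex.I)⁻¹ := by
    rw [fibCoeff]; rw [if_neg hpq.symm, if_pos rfl]
  rw [hp, hq, norm_neg, hnorm]
  ring

lemma normSq_fib (n : ℕ) : normSq (fibCoeff n) = 1 / 2 := by
  have h := key n (fun _ => 1)
  simp only [one_mul] at h
  rw [normSq, h]; norm_num

lemma gradSq_fib (n : ℕ) :
    gradSq (fibCoeff n) = ((Nat.fib (n + 1) : ℝ) ^ 2 + (Nat.fib n : ℝ) ^ 2) / 2 := by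
  rw [gradSq, key n (fun k => ((k.1 : ℝ)) ^ 2 + ((k.2 : ℝ)) ^ 2)]
  push_cast; ring

lemma dirSq_fib (n : ℕ) (x : ℝ) :
    dirSq (1, x) (fibCoeff n)
      = ((Nat.fib (n + 1) : ℝ) - x * (Nat.fib n : ℝ)) ^ 2 / 2 := by
  rw [dirSq, key n (fun k => (((1:ℝ), x).1 * k.1 + ((1:ℝ), x).2 * k.2) ^ 2)]
  push_cast; ring

lemma part1 (n : ℕ) (hn : 1 ≤ n) :
    Real.sqrt (gradSq (fibCoeff n)) *
        Real.sqrt (dirSq (1, (1 + Real.sqrt 5) / 2) (fibCoeff n))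
      = Real.sqrt ((Nat.fib (n + 1) : ℝ) ^ 2 / (Nat.fib n : ℝ) ^ 2 + 1) *
          |(Nat.fib (n + 1) : ℝ) / Nat.fib n - (1 + Real.sqrt 5) / 2| *
          (Nat.fib n : ℝ) ^ 2 * normSq (fibCoeff n) := by
  have hG0 : (0:ℝ) < Nat.fib n := by exact_mod_cast Nat.fib_pos.2 hn
  rw [gradSq_fib, dirSq_fib, normSq_fib]
  set x : ℝ := (1 + Real.sqrt 5) / 2
  set F : ℝ := (Nat.fib (n + 1) : ℝ)
  set G : ℝ := (Nat.fib n : ℝ)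
  have hs2 : Real.sqrt 2 * Real.sqrt 2 = 2 := Real.mul_self_sqrt (by norm_num)
  have h1 : Real.sqrt ((F ^ 2 + G ^ 2) / 2)
      = Real.sqrt (F ^ 2 + G ^ 2) / Real.sqrt 2 := Real.sqrt_div (by positivity) 2
  have h2 : Real.sqrt ((F - x * G) ^ 2 / 2) = |F - x * G| / Real.sqrt 2 := by
    rw [Real.sqrt_div (sq_nonneg _) 2, Real.sqrt_sq_eq_abs]
  have h3 : F ^ 2 / G ^ 2 + 1 = (F ^ 2 + G ^ 2) / G ^ 2 := by field_simp
  have h4 : Real.sqrt ((F ^ 2 + G ^ 2) / G ^ 2)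
      = Real.sqrt (F ^ 2 + G ^ 2) / G := by
    rw [Real.sqrt_div (by positivity), Real.sqrt_sq hG0.le]
  have h5 : F / G - x = (F - x * G) / G := by field_simp
  rw [h1, h2, h3, h4, h5, abs_div, abs_of_pos hG0]
  have hs2' : Real.sqrt 2 ≠ 0 := by positivity
  field_simp
  nlinarith [hs2, Real.sqrt_nonneg (F ^ 2 + G ^ 2), abs_nonneg (F - x * G),
    Real.sq_sqrt (show (0:ℝ) ≤ 2 by norm_num), abs_nonneg (F - G * x)]

lemma ratio_eq (n : ℕ) :
    Real.sqrt (gradSq (fibCoeff n)) *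
        Real.sqrt (dirSq (1, (1 + Real.sqrt 5) / 2) (fibCoeff n)) /
        normSq (fibCoeff n)
      = Real.sqrt (((φ - ψ * (-ψ ^ 2) ^ n) / Real.sqrt 5) ^ 2
          + ((1 - (-ψ ^ 2) ^ n) / Real.sqrt 5) ^ 2) := by
  rw [gradSq_fib, dirSq_fib, normSq_fib]
  set F : ℝ := (Nat.fib (n + 1) : ℝ) with hFdef
  set G : ℝ := (Nat.fib n : ℝ) with hGdef
  have hψ : (0:ℝ) < -ψ := neg_pos.2 goldenConj_neg
  set t : ℝ := (-ψ) ^ n with ht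
  have ht0 : (0:ℝ) ≤ t := pow_nonneg hψ.le n
  have hφψ : φ * (-ψ) = 1 := by rw [mul_neg, goldenRatio_mul_goldenConj]; ring
  have hψψ : ψ * (-ψ) = -ψ ^ 2 := by ring
  have habs : |F - (1 + Real.sqrt 5) / 2 * G| = t := by
    rw [show F - (1 + Real.sqrt 5) / 2 * G = ψ ^ n from fib_succ_sub_goldenRatio_mul_fib n, ht,
      abs_pow, abs_of_neg goldenConj_neg]
  have hF0 : G * t = (1 - (-ψ ^ 2) ^ n) / Real.sqrt 5 := by
    rw [hGdef, Real.coe_fib_eq n, ht, div_mul_eq_mul_div]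
    congr 1
    calc (φ ^ n - ψ ^ n) * (-ψ) ^ n = (φ * (-ψ)) ^ n - (ψ * (-ψ)) ^ n := by
          rw [mul_pow, mul_pow]; ring
      _ = 1 - (-ψ ^ 2) ^ n := by rw [hφψ, hψψ, one_pow]
  have hF1 : F * t = (φ - ψ * (-ψ ^ 2) ^ n) / Real.sqrt 5 := by
    rw [hFdef, Real.coe_fib_eq (n + 1), ht, div_mul_eq_mul_div]
    congr 1
    calc (φ ^ (n + 1) - ψ ^ (n + 1)) * (-ψ) ^ n
        = φ * (φ * (-ψ)) ^ n - ψ * (ψ * (-ψ)) ^ n := by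
          rw [mul_pow, mul_pow, pow_succ, pow_succ]; ring
      _ = φ - ψ * (-ψ ^ 2) ^ n := by rw [hφψ, hψψ, one_pow, mul_one]
  have lhs_eq : Real.sqrt ((F ^ 2 + G ^ 2) / 2) *
        Real.sqrt ((F - (1 + Real.sqrt 5) / 2 * G) ^ 2 / 2) / (1 / 2)
      = Real.sqrt (F ^ 2 + G ^ 2) * t := by
    rw [Real.sqrt_div (by positivity) 2, Real.sqrt_div (sq_nonneg _) 2,
      Real.sqrt_sq_eq_abs, habs, div_mul_div_comm,
      Real.mul_self_sqrt (by norm_num : (0:ℝ) ≤ 2)]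
    ring
  rw [lhs_eq, ← hF1, ← hF0]
  calc Real.sqrt (F ^ 2 + G ^ 2) * t
      = Real.sqrt ((F ^ 2 + G ^ 2) * t ^ 2) := by
        rw [Real.sqrt_mul (by positivity), Real.sqrt_sq ht0]
    _ = Real.sqrt ((F * t) ^ 2 + (G * t) ^ 2) := by ring_nf

lemma part2 :
    Tendsto (fun n : ℕ =>
        Real.sqrt (gradSq (fibCoeff n)) *
          Real.sqrt (dirSq (1, (1 + Real.sqrt 5) / 2) (fibCoeff n)) /
          normSq (fibCoeff n))
      atTop (nhds (Real.sqrt ((5 + Real.sqrt 5) / 10))) := by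
  have hr : |(-ψ ^ 2 : ℝ)| < 1 := by
    rw [abs_neg, abs_of_nonneg (by positivity)]
    nlinarith [neg_one_lt_goldenConj, goldenConj_neg]
  have h0 : Tendsto (fun n : ℕ => (-ψ ^ 2 : ℝ) ^ n) atTop (nhds 0) :=
    tendsto_pow_atTop_nhds_zero_of_abs_lt_one hr
  have hg : Continuous (fun s : ℝ =>
      Real.sqrt (((φ - ψ * s) / Real.sqrt 5) ^ 2 + ((1 - s) / Real.sqrt 5) ^ 2)) := by
    fun_prop
  have h1 := (hg.tendsto 0).comp h0
  have harg : ((φ - ψ * 0) / Real.sqrt 5) ^ 2 + ((1 - 0) / Real.sqrt 5) ^ 2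
      = (5 + Real.sqrt 5) / 10 := by
    have hs : Real.sqrt 5 ^ 2 = 5 := Real.sq_sqrt (by norm_num)
    have hs0 : Real.sqrt 5 ≠ 0 := by positivity
    field_simp
    nlinarith [hs, Real.sqrt_nonneg 5]
  simp only [Function.comp_def, harg] at h1
  exact h1.congr (fun n => (ratio_eq n).symm)

lemma part3 : Real.sqrt ((5 + Real.sqrt 5) / 10)
    = Real.sqrt (1 + ((1 + Real.sqrt 5) / 2) ^ 2) / Real.sqrt 5 := by
  rw [← Real.sqrt_div (by positivity : (0:ℝ) ≤ 1 + ((1 + Real.sqrt 5) / 2) ^ 2) 5]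
  congr 1
  have hs : Real.sqrt 5 ^ 2 = 5 := Real.sq_sqrt (by norm_num)
  nlinarith [hs, Real.sqrt_nonneg 5]


/-- For `φ = (1+√5)/2` and `f_n(x,y) = sin(F_{n+1}x - F_n y)`:
`‖∇f_n‖ ⬝ ‖∂ₓf_n + φ ∂_y f_n‖
  = √(F_{n+1}²/F_n² + 1) |F_{n+1}/F_n - φ| F_n² ‖f_n‖²`,
and this ratio converges to `√((5+√5)/10) = |(1,φ)|/√5`. -/
theorem stmt_11 :
    (∀ n : ℕ, 1 ≤ n →
      Real.sqrt (gradSq (fibCoeff n)) *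
          Real.sqrt (dirSq (1, (1 + Real.sqrt 5) / 2) (fibCoeff n))
        = Real.sqrt ((Nat.fib (n + 1) : ℝ) ^ 2 / (Nat.fib n : ℝ) ^ 2 + 1) *
            |(Nat.fib (n + 1) : ℝ) / Nat.fib n - (1 + Real.sqrt 5) / 2| *
            (Nat.fib n : ℝ) ^ 2 * normSq (fibCoeff n)) ∧
    Tendsto (fun n : ℕ =>
        Real.sqrt (gradSq (fibCoeff n)) *
          Real.sqrt (dirSq (1, (1 + Real.sqrt 5) / 2) (fibCoeff n)) /
          normSq (fibCoeff n))
      atTop (nhds (Real.sqrt ((5 + Real.sqrt 5) / 10))) ∧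
    Real.sqrt ((5 + Real.sqrt 5) / 10)
      = Real.sqrt (1 + ((1 + Real.sqrt 5) / 2) ^ 2) / Real.sqrt 5 := by
  exact ⟨fun n hn => part1 n hn, part2, part3⟩
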